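/- Let f be a Boolean function over a finite variable set X and T a vtree over X. Then every TDD respecting T that computes f has, for every node t of T, at least S_t t-nodes, where S_t is the number of non-trivial X_t-subfunctions of f. -/
import Mathlib


/-- A vtree: a rooted binary tree whose leaves are labeled by variables. -/
inductive Vtree (V : Type) where
  | leaf : V → Vtree V
  | node : Vtree V → Vtree V → Vtree V

namespace Vtree

variable {V : Type} [DecidableEq V]

/-- The set of variables labeling the leaves of a vtree. -/
def vars : Vtree V → Finset V
  | leaf x => {x}
  | node l r => l.vars ∪ r.vars

/-- A vtree is proper when its leaves carry pairwise distinct variables,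
so that the leaves are in one-to-one correspondence with `vars`. -/
def Proper : Vtree V → Prop
  | leaf _ => True
  | node l r => l.Proper ∧ r.Proper ∧ Disjoint l.vars r.vars

/-- `T.IsNode t` : `t` is (the subtree rooted at) a node of `T`. -/
def IsNode : Vtree V → Vtree V → Prop
  | leaf x, t => t = leaf x
  | node l r, t => t = node l r ∨ l.IsNode t ∨ r.IsNode t

/-- Remove every leaf whose variable is in `Y`, suppressing unary nodes.
Returns `none` if no leaf survives. -/
def restrict (Y : Finset V) : Vtree V → Option (Vtree V)
  | leaf x => if x ∈ Y then none else some (leaf x)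
  | node l r =>
    match l.restrict Y, r.restrict Y with
    | none, o => o
    | some l', none => some l'
    | some l', some r' => some (node l' r')

/-- The vtree `T ∖ x`. -/
def remove (x : V) (T : Vtree V) : Option (Vtree V) := T.restrict {x}

/-- A vtree is linear when every internal node has a leaf child. -/
def Linear : Vtree V → Prop
  | leaf _ => True
  | node l r => ((∃ x, l = leaf x) ∨ (∃ x, r = leaf x)) ∧ l.Linear ∧ r.Linear

/-- The variable order induced by a linear vtree. -/
def order : Vtree V → List V
  | leaf x => [x]
  | node (leaf x) r => x :: r.order
  | node l (leaf x) => x :: l.order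
  | node l r => l.order ++ r.order

end Vtree

/-- Labels of leaf-layer nodes of a TDD: the positive literal, the negative
literal, and the constants 1 and 0. -/
inductive TLab where
  | pos | neg | one | zero
deriving DecidableEq

/-- Disjunction of two leaf labels (used when contracting twin leaf nodes). -/
def TLab.lor : TLab → TLab → TLab
  | .zero, a => a
  | a, .zero => a
  | .one, _ => .one
  | _, .one => .one
  | .pos, .pos => .pos
  | .neg, .neg => .neg
  | .pos, .neg => .one
  | .neg, .pos => .one

/-- A (non-deterministic) tree decision diagram structured along a vtree:
one layer of nodes (identified by natural numbers) per vtree node; leaf-layer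
nodes carry labels, internal-layer nodes carry their sets of input pairs. -/
inductive NTDD (V : Type) where
  | leaf (x : V) (ns : Finset ℕ) (lab : ℕ → TLab)
  | node (l r : NTDD V) (ns : Finset ℕ) (E : ℕ → Finset (ℕ × ℕ))

namespace NTDD

variable {V : Type}

/-- The vtree that an nTDD is structured along. -/
def shape : NTDD V → Vtree V
  | leaf x _ _ => .leaf x
  | node l r _ _ => .node l.shape r.shape

/-- The set of nodes of the top (root) layer. -/
def nodes : NTDD V → Finset ℕ
  | leaf _ ns _ => ns
  | node _ _ ns _ => ns

/-- The size of an nTDD: the total number of input pairs. -/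
def size : NTDD V → ℕ
  | leaf _ _ _ => 0
  | node l r ns E => l.size + r.size + ∑ g ∈ ns, (E g).card

/-- The width of an nTDD: the maximal cardinality of a layer. -/
def width : NTDD V → ℕ
  | leaf _ ns _ => ns.card
  | node l r ns _ => max ns.card (max l.width r.width)

/-- `C.sat g τ` : (the restriction of) the assignment `τ` is a model of the
function `f_g` computed by the top-layer node `g` of `C`. -/
def sat : NTDD V → ℕ → (V → Bool) → Prop
  | leaf x _ lab, g, τ =>
    match lab g with
    | .pos => τ x = true
    | .neg => τ x = false
    | .one => True
    | .zero => False
  | node l r _ E, g, τ => ∃ p ∈ E g, l.sat p.1 τ ∧ r.sat p.2 τ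

/-- Well-formedness: input pairs of top-layer nodes reference nodes of the
children layers. -/
def WF : NTDD V → Prop
  | leaf _ _ _ => True
  | node l r ns E => l.WF ∧ r.WF ∧ ∀ g ∈ ns, ∀ p ∈ E g, p.1 ∈ l.nodes ∧ p.2 ∈ r.nodes

/-- Determinism, turning an nTDD into a TDD: at each leaf layer at most one
node labeled by each of `x`, `¬x`, `1`, and if a node is labeled `1` then all
other nodes are labeled `0`; at each internal layer every pair is the input of
at most one node. -/
def Det : NTDD V → Prop
  | leaf _ ns lab =>
      (∀ g ∈ ns, ∀ g' ∈ ns, lab g = TLab.pos → lab g' = TLab.pos → g = g') ∧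
      (∀ g ∈ ns, ∀ g' ∈ ns, lab g = TLab.neg → lab g' = TLab.neg → g = g') ∧
      (∀ g ∈ ns, ∀ g' ∈ ns, lab g = TLab.one → lab g' = TLab.one → g = g') ∧
      (∀ g ∈ ns, lab g = TLab.one → ∀ g' ∈ ns, g' ≠ g → lab g' = TLab.zero)
  | node l r ns E => l.Det ∧ r.Det ∧ ∀ g ∈ ns, ∀ g' ∈ ns, g ≠ g' → Disjoint (E g) (E g')

/-- `C.Subdiagram D` : `D` is the sub-diagram of `C` sitting at some node of
the underlying vtree (including `C` itself). -/
def Subdiagram : NTDD V → NTDD V → Prop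
  | leaf x ns lab, D => D = leaf x ns lab
  | node l r ns E, D => D = node l r ns E ∨ l.Subdiagram D ∨ r.Subdiagram D

/-- A TDD is full if, at every layer, every assignment is a model of some node
of that layer. -/
def Full (C : NTDD V) : Prop :=
  ∀ D : NTDD V, C.Subdiagram D → ∀ τ : V → Bool, ∃ g ∈ D.nodes, D.sat g τ

end NTDD

/-- A choice of one node id per vtree node, mirroring the vtree: the data of a
certificate. -/
inductive IdTree where
  | leaf (g : ℕ)
  | node (g : ℕ) (l r : IdTree)

/-- The id chosen at the root. -/
def IdTree.root : IdTree → ℕ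
  | .leaf g => g
  | .node g _ _ => g

namespace NTDD

variable {V : Type}

/-- `C.IsCert P τ` : the choice `P` of one node per layer is a certificate for
`τ` in `C` (except for the root condition `P.root = out`, stated separately):
at a leaf labeled `x` the chosen node is labeled `1` or by a literal satisfied
by `τ`, and at an internal node the chosen pair of children nodes is an input
of the chosen node. -/
def IsCert : NTDD V → IdTree → (V → Bool) → Prop
  | leaf x ns lab, IdTree.leaf g, τ =>
      g ∈ ns ∧ (lab g = TLab.one ∨ (lab g = TLab.pos ∧ τ x = true) ∨
        (lab g = TLab.neg ∧ τ x = false))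
  | node l r ns E, IdTree.node g pl pr, τ =>
      g ∈ ns ∧ (pl.root, pr.root) ∈ E g ∧ l.IsCert pl τ ∧ r.IsCert pr τ
  | _, _, _ => False

/-- `SubPair C P D Q` : `D` is the sub-diagram of `C` at some vtree node `t`,
and `Q` is the corresponding part of the certificate data `P` (so `Q.root` is
the node that `P` chooses at `t`). -/
def SubPair : NTDD V → IdTree → NTDD V → IdTree → Prop
  | leaf x ns lab, P, D, Q => D = leaf x ns lab ∧ Q = P
  | node l r ns E, P, D, Q =>
      (D = node l r ns E ∧ Q = P) ∨
      (match P with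
       | IdTree.node _ pl pr => l.SubPair pl D Q ∨ r.SubPair pr D Q
       | _ => False)

/-- Contract the two top-layer nodes `g1, g1'` into the fresh node `v`. -/
def contractLayer (g1 g1' v : ℕ) : NTDD V → NTDD V
  | leaf x ns lab =>
      leaf x (insert v ((ns.erase g1).erase g1'))
        (fun g => if g = v then (lab g1).lor (lab g1') else lab g)
  | node l r ns E =>
      node l r (insert v ((ns.erase g1).erase g1'))
        (fun g => if g = v then E g1 ∪ E g1' else E g)

/-- Twin contraction of nodes `g1, g1'` of the left child layer into `v`:
they are merged in the left layer, and every input pair `(g1, g2)` or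
`(g1', g2)` of a top-layer node is replaced by `(v, g2)`. -/
def contractAtL (g1 g1' v : ℕ) : NTDD V → NTDD V
  | node l r ns E =>
      node (l.contractLayer g1 g1' v) r ns
        (fun g => (E g).image (fun p => if p.1 = g1 ∨ p.1 = g1' then (v, p.2) else p))
  | C => C

/-- Twin contraction of nodes `g1, g1'` of the right child layer into `v`. -/
def contractAtR (g1 g1' v : ℕ) : NTDD V → NTDD V
  | node l r ns E =>
      node l (r.contractLayer g1 g1' v) ns
        (fun g => (E g).image (fun p => if p.2 = g1 ∨ p.2 = g1' then (p.1, v) else p))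
  | C => C

open Classical in
/-- Replace the sub-diagram `D` of `C` by `D'` (in a proper vtree, sub-diagrams
at distinct positions are distinct, so this is unambiguous). -/
noncomputable def replace : NTDD V → NTDD V → NTDD V → NTDD V
  | leaf x ns lab, D, D' => if leaf x ns lab = D then D' else leaf x ns lab
  | node l r ns E, D, D' =>
      if node l r ns E = D then D'
      else node (l.replace D D') (r.replace D D') ns E

/-- `g1` and `g1'` are twins of the left child layer: they have the same
siblings with respect to every top-layer node. -/
def TwinsL (g1 g1' : ℕ) : NTDD V → Prop
  | node l _ ns E => g1 ∈ l.nodes ∧ g1' ∈ l.nodes ∧ g1 ≠ g1' ∧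
      ∀ g ∈ ns, ∀ g2 : ℕ, ((g1, g2) ∈ E g ↔ (g1', g2) ∈ E g)
  | _ => False

/-- `g1` and `g1'` are twins of the right child layer. -/
def TwinsR (g1 g1' : ℕ) : NTDD V → Prop
  | node _ r ns E => g1 ∈ r.nodes ∧ g1' ∈ r.nodes ∧ g1 ≠ g1' ∧
      ∀ g ∈ ns, ∀ g2 : ℕ, ((g2, g1) ∈ E g ↔ (g2, g1') ∈ E g)
  | _ => False

/-- The node set of the left child layer. -/
def leftNodes : NTDD V → Finset ℕ
  | node l _ _ _ => l.nodes
  | _ => ∅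

/-- The node set of the right child layer. -/
def rightNodes : NTDD V → Finset ℕ
  | node _ r _ _ => r.nodes
  | _ => ∅

end NTDD

/-- The number of distinct non-trivial `Y`-subfunctions of the Boolean
function `f` : functions of the form `σ ↦ f (Y.piecewise τ σ)` for some
`τ`, having at least one model. -/
noncomputable def subCount {V : Type} [DecidableEq V] (f : (V → Bool) → Prop) (Y : Finset V) : ℕ :=
  Nat.card {h : (V → Bool) → Prop |
    (∃ τ : V → Bool, h = fun σ => f (Y.piecewise τ σ)) ∧ ∃ σ : V → Bool, h σ}

/-- The number of distinct `Y`-subfunctions of `f` (trivial ones included). -/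
noncomputable def subCountAll {V : Type} [DecidableEq V] (f : (V → Bool) → Prop) (Y : Finset V) : ℕ :=
  Nat.card {h : (V → Bool) → Prop |
    ∃ τ : V → Bool, h = fun σ => f (Y.piecewise τ σ)}

namespace NTDD

variable {V : Type}

theorem isCert_root_mem (D : NTDD V) (Q : IdTree) (τ : V → Bool)
    (h : D.IsCert Q τ) : Q.root ∈ D.nodes := by
  cases D with
  | leaf x ns lab =>
    cases Q with
    | leaf g => exact h.1
    | node g l r => exact h.elim
  | node l r ns E =>
    cases Q with
    | leaf g => exact h.elim
    | node g pl pr => exact h.1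

theorem sat_of_isCert : ∀ (D : NTDD V) (Q : IdTree) (τ : V → Bool),
    D.IsCert Q τ → D.sat Q.root τ := by
  intro D
  induction D with
  | leaf x ns lab =>
    intro Q τ h
    cases Q with
    | leaf g =>
      obtain ⟨_, h⟩ := h
      rcases h with h | ⟨h, hx⟩ | ⟨h, hx⟩
      · simp [sat, IdTree.root, h]
      · simp [sat, IdTree.root, h, hx]
      · simp [sat, IdTree.root, h, hx]
    | node g l r => exact h.elim
  | node l r ns E ihl ihr =>
    intro Q τ h
    cases Q with
    | leaf g => exact h.elim
    | node g pl pr =>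
      obtain ⟨hg, hE, hl, hr⟩ := h
      exact ⟨(pl.root, pr.root), hE, ihl pl τ hl, ihr pr τ hr⟩

theorem exists_cert : ∀ (D : NTDD V), D.WF → ∀ g ∈ D.nodes, ∀ τ : V → Bool,
    D.sat g τ → ∃ Q : IdTree, D.IsCert Q τ ∧ Q.root = g := by
  intro D
  induction D with
  | leaf x ns lab =>
    intro _ g hg τ hsat
    refine ⟨IdTree.leaf g, ⟨hg, ?_⟩, rfl⟩
    revert hsat
    cases h : lab g <;> simp [sat, h]
  | node l r ns E ihl ihr =>
    intro hWF g hg τ hsat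
    obtain ⟨hWl, hWr, hE⟩ := hWF
    obtain ⟨p, hp, hsl, hsr⟩ := hsat
    obtain ⟨h1, h2⟩ := hE g hg p hp
    obtain ⟨Ql, hQl, hQlr⟩ := ihl hWl p.1 h1 τ hsl
    obtain ⟨Qr, hQr, hQrr⟩ := ihr hWr p.2 h2 τ hsr
    exact ⟨IdTree.node g Ql Qr, ⟨hg, by simp only [hQlr, hQrr, Prod.mk.eta]; exact hp, hQl, hQr⟩, rfl⟩

theorem isCert_congr [DecidableEq V] : ∀ (D : NTDD V) (Q : IdTree) (τ τ' : V → Bool),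
    (∀ x ∈ D.shape.vars, τ x = τ' x) → D.IsCert Q τ → D.IsCert Q τ' := by
  intro D
  induction D with
  | leaf x ns lab =>
    intro Q τ τ' hagree h
    cases Q with
    | leaf g =>
      have hx : τ x = τ' x := hagree x (by simp [shape, Vtree.vars])
      obtain ⟨hg, h⟩ := h
      refine ⟨hg, ?_⟩
      rcases h with h | ⟨h, hv⟩ | ⟨h, hv⟩
      · exact Or.inl h
      · exact Or.inr (Or.inl ⟨h, hx ▸ hv⟩)
      · exact Or.inr (Or.inr ⟨h, hx ▸ hv⟩)
    | node g l r => exact h.elim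
  | node l r ns E ihl ihr =>
    intro Q τ τ' hagree h
    cases Q with
    | leaf g => exact h.elim
    | node g pl pr =>
      obtain ⟨hg, hp, hl, hr⟩ := h
      refine ⟨hg, hp, ?_, ?_⟩
      · exact ihl pl τ τ' (fun x hx => hagree x
          (by simp only [shape, Vtree.vars, Finset.mem_union]; exact Or.inl hx)) hl
      · exact ihr pr τ τ' (fun x hx => hagree x
          (by simp only [shape, Vtree.vars, Finset.mem_union]; exact Or.inr hx)) hr

theorem cert_unique : ∀ (D : NTDD V), D.Det → ∀ (Q Q' : IdTree) (τ : V → Bool),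
    D.IsCert Q τ → D.IsCert Q' τ → Q = Q' := by
  intro D
  induction D with
  | leaf x ns lab =>
    intro hdet Q Q' τ h h'
    cases Q with
    | node _ _ _ => exact h.elim
    | leaf g =>
      cases Q' with
      | node _ _ _ => exact h'.elim
      | leaf g' =>
        obtain ⟨hpos, hneg, hone, hzero⟩ := hdet
        obtain ⟨hg, hc⟩ := h
        obtain ⟨hg', hc'⟩ := h'
        have : g = g' := by
          rcases hc with h1 | ⟨h1, hv⟩ | ⟨h1, hv⟩ <;>
            rcases hc' with h2 | ⟨h2, hv'⟩ | ⟨h2, hv'⟩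
          · exact hone g hg g' hg' h1 h2
          · by_contra hne
            have := hzero g hg h1 g' hg' (fun e => hne e.symm)
            simp [h2] at this
          · by_contra hne
            have := hzero g hg h1 g' hg' (fun e => hne e.symm)
            simp [h2] at this
          · by_contra hne
            have := hzero g' hg' h2 g hg hne
            simp [h1] at this
          · exact hpos g hg g' hg' h1 h2
          · simp [hv] at hv'
          · by_contra hne
            have := hzero g' hg' h2 g hg hne
            simp [h1] at this
          · simp [hv] at hv'
          · exact hneg g hg g' hg' h1 h2
        simp [this]
  | node l r ns E ihl ihr =>
    intro hdet Q Q' τ h h'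
    obtain ⟨dl, dr, dE⟩ := hdet
    cases Q with
    | leaf _ => exact h.elim
    | node g pl pr =>
      cases Q' with
      | leaf _ => exact h'.elim
      | node g' pl' pr' =>
        obtain ⟨hg, hp, hcl, hcr⟩ := h
        obtain ⟨hg', hp', hcl', hcr'⟩ := h'
        have hl : pl = pl' := ihl dl pl pl' τ hcl hcl'
        have hr : pr = pr' := ihr dr pr pr' τ hcr hcr'
        subst hl; subst hr
        have : g = g' := by
          by_contra hne
          exact Finset.disjoint_left.mp (dE g hg g' hg' hne) hp hp'
        simp [this]

theorem subdiagram_det : ∀ (C D : NTDD V), C.Subdiagram D → C.Det → D.Det := by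
  intro C
  induction C with
  | leaf x ns lab =>
    intro D h hd
    have h' : D = leaf x ns lab := h
    rw [h']; exact hd
  | node l r ns E ihl ihr =>
    intro D h hd
    rcases (h : D = node l r ns E ∨ l.Subdiagram D ∨ r.Subdiagram D) with h | h | h
    · rw [h]; exact hd
    · exact ihl D h hd.1
    · exact ihr D h hd.2.1

theorem subdiagram_vars [DecidableEq V] : ∀ (C D : NTDD V), C.Subdiagram D →
    D.shape.vars ⊆ C.shape.vars := by
  intro C
  induction C with
  | leaf x ns lab =>
    intro D h
    have h' : D = leaf x ns lab := h
    rw [h']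
  | node l r ns E ihl ihr =>
    intro D h
    rcases (h : D = node l r ns E ∨ l.Subdiagram D ∨ r.Subdiagram D) with h | h | h
    · rw [h]
    · exact (ihl D h).trans Finset.subset_union_left
    · exact (ihr D h).trans Finset.subset_union_right

theorem extract_cert : ∀ (C D : NTDD V), C.Subdiagram D → ∀ (P : IdTree) (τ : V → Bool),
    C.IsCert P τ → ∃ Q, D.IsCert Q τ := by
  intro C
  induction C with
  | leaf x ns lab =>
    intro D hsub P τ hP
    have h' : D = leaf x ns lab := hsub
    rw [h']; exact ⟨P, hP⟩
  | node l r ns E ihl ihr =>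
    intro D hsub P τ hP
    rcases (hsub : D = node l r ns E ∨ l.Subdiagram D ∨ r.Subdiagram D) with h | h | h
    · rw [h]; exact ⟨P, hP⟩
    · cases P with
      | leaf g => exact hP.elim
      | node g pl pr => exact ihl D h pl τ hP.2.2.1
    · cases P with
      | leaf g => exact hP.elim
      | node g pl pr => exact ihr D h pr τ hP.2.2.2

theorem splice [DecidableEq V] : ∀ (C : NTDD V), C.shape.Proper → C.Det →
    ∀ (D : NTDD V), C.Subdiagram D →
    ∀ (P : IdTree) (τ : V → Bool) (Q' : IdTree) (τ' : V → Bool),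
    C.IsCert P τ → D.IsCert Q' τ' →
    (∀ x, x ∉ D.shape.vars → τ x = τ' x) →
    (∃ Q, D.IsCert Q τ ∧ Q.root = Q'.root) →
    ∃ P', C.IsCert P' τ' ∧ P'.root = P.root := by
  intro C
  induction C with
  | leaf x ns lab =>
    intro _ hdet D hsub P τ Q' τ' hP hQ' _ hex
    obtain ⟨Q, hQ, hroot⟩ := hex
    have h' : D = leaf x ns lab := hsub
    subst h'
    have hQP : Q = P := cert_unique _ hdet Q P τ hQ hP
    exact ⟨Q', hQ', by rw [← hroot, hQP]⟩
  | node l r ns E ihl ihr =>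
    intro hprop hdet D hsub P τ Q' τ' hP hQ' hagree hex
    have hprop' : l.shape.Proper ∧ r.shape.Proper ∧ Disjoint l.shape.vars r.shape.vars := hprop
    obtain ⟨hpl, hpr, hdisj⟩ := hprop'
    obtain ⟨dl, dr, dE⟩ := hdet
    rcases (hsub : D = node l r ns E ∨ l.Subdiagram D ∨ r.Subdiagram D) with h | h | h
    · subst h
      obtain ⟨Q, hQ, hroot⟩ := hex
      have hQP : Q = P := cert_unique (NTDD.node l r ns E) ⟨dl, dr, dE⟩ Q P τ hQ hP
      exact ⟨Q', hQ', by rw [← hroot, hQP]⟩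
    · cases P with
      | leaf g => exact hP.elim
      | node g pl pr =>
        obtain ⟨hg, hEp, hcl, hcr⟩ := hP
        obtain ⟨pl', hpl', hplroot⟩ := ihl hpl dl D h pl τ Q' τ' hcl hQ' hagree hex
        have hrc : r.IsCert pr τ' := isCert_congr r pr τ τ'
          (fun x hx => hagree x
            (fun hxD => (Finset.disjoint_left.mp hdisj (subdiagram_vars l D h hxD)) hx)) hcr
        exact ⟨IdTree.node g pl' pr, ⟨hg, by rw [hplroot]; exact hEp, hpl', hrc⟩, rfl⟩
    · cases P with
      | leaf g => exact hP.elim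
      | node g pl pr =>
        obtain ⟨hg, hEp, hcl, hcr⟩ := hP
        obtain ⟨pr', hpr', hprroot⟩ := ihr hpr dr D h pr τ Q' τ' hcr hQ' hagree hex
        have hlc : l.IsCert pl τ' := isCert_congr l pl τ τ'
          (fun x hx => hagree x
            (fun hxD => (Finset.disjoint_left.mp hdisj hx) (subdiagram_vars r D h hxD))) hcl
        exact ⟨IdTree.node g pl pr', ⟨hg, by rw [hprroot]; exact hEp, hlc, hpr'⟩, rfl⟩

end NTDD

/-- Lower bound: every TDD respecting a vtree `T` over `X`
that computes a Boolean function `f` over `X` has, for every node `t` of `T`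
(given as the sub-diagram `D` at `t`), at least `S_t` `t`-nodes, where `S_t`
is the number of non-trivial `X_t`-subfunctions of `f`. -/
theorem stmt10 {V : Type} [DecidableEq V] (X : Finset V) (T : Vtree V)
    (hTp : T.Proper) (hTX : T.vars = X)
    (f : (V → Bool) → Prop)
    (hf : ∀ τ σ : V → Bool, (∀ x ∈ X, τ x = σ x) → (f τ ↔ f σ))
    (C : NTDD V) (out : ℕ) (hsh : C.shape = T) (hWF : C.WF) (hDet : C.Det)
    (hout : out ∈ C.nodes)
    (hcomp : ∀ τ : V → Bool, (C.sat out τ ↔ f τ)) :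
    ∀ D : NTDD V, C.Subdiagram D → subCount f D.shape.vars ≤ D.nodes.card := by
  classical
  intro D hsub
  have hCp : C.shape.Proper := by rw [hsh]; exact hTp
  have hsound : ∀ (P : IdTree) (τ : V → Bool), C.IsCert P τ → P.root = out → f τ :=
    fun P τ h hr => (hcomp τ).1 (hr ▸ NTDD.sat_of_isCert C P τ h)
  have hcompl : ∀ τ : V → Bool, f τ → ∃ P, C.IsCert P τ ∧ P.root = out :=
    fun τ hτ => NTDD.exists_cert C hWF out hout τ ((hcomp τ).2 hτ)
  set Y : Finset V := D.shape.vars with hY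
  have lift : ∀ (τa σa : V → Bool) (Q : IdTree),
      D.IsCert Q (Y.piecewise τa σa) → ∀ σ, D.IsCert Q (Y.piecewise τa σ) := by
    intro τa σa Q hQ σ
    refine NTDD.isCert_congr D Q _ _ (fun x hx => ?_) hQ
    have hx' : x ∈ Y := hx
    rw [Finset.piecewise_eq_of_mem _ _ _ hx', Finset.piecewise_eq_of_mem _ _ _ hx']
  have dir : ∀ (τa τb : V → Bool) (Qa Qb : IdTree),
      (∀ σ, D.IsCert Qa (Y.piecewise τa σ)) →
      (∀ σ, D.IsCert Qb (Y.piecewise τb σ)) →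
      Qa.root = Qb.root →
      ∀ σ'' : V → Bool, f (Y.piecewise τa σ'') → f (Y.piecewise τb σ'') := by
    intro τa τb Qa Qb hQa hQb hroot σ'' hfa
    obtain ⟨P, hP, hProot⟩ := hcompl _ hfa
    obtain ⟨P', hP', hP'root⟩ := NTDD.splice C hCp hDet D hsub P _ Qb _ hP (hQb σ'')
      (fun x hx => by
        have hx' : x ∉ Y := hx
        rw [Finset.piecewise_eq_of_notMem _ _ _ hx', Finset.piecewise_eq_of_notMem _ _ _ hx'])
      ⟨Qa, hQa σ'', hroot⟩
    exact hsound P' _ hP' (hP'root.trans hProot)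
  unfold subCount
  set S : Set ((V → Bool) → Prop) := {h : (V → Bool) → Prop |
    (∃ τ : V → Bool, h = fun σ => f (Y.piecewise τ σ)) ∧ ∃ σ : V → Bool, h σ} with hS
  have htau : ∀ h : ↥S, ∃ τ : V → Bool,
      (h : (V → Bool) → Prop) = fun σ => f (Y.piecewise τ σ) := fun h => h.2.1
  have hsig : ∀ h : ↥S, ∃ σ : V → Bool, (h : (V → Bool) → Prop) σ := fun h => h.2.2
  let tau : ↥S → (V → Bool) := fun h => Classical.choose (htau h)
  have htau' : ∀ h : ↥S, (h : (V → Bool) → Prop) = fun σ => f (Y.piecewise (tau h) σ) :=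
    fun h => Classical.choose_spec (htau h)
  let sig : ↥S → (V → Bool) := fun h => Classical.choose (hsig h)
  have hsig' : ∀ h : ↥S, (h : (V → Bool) → Prop) (sig h) :=
    fun h => Classical.choose_spec (hsig h)
  have hmodel : ∀ h : ↥S, f (Y.piecewise (tau h) (sig h)) := by
    intro h
    have := hsig' h
    rw [htau' h] at this
    exact this
  have getQ : ∀ h : ↥S, ∃ Q, D.IsCert Q (Y.piecewise (tau h) (sig h)) := by
    intro h
    obtain ⟨P, hP, _⟩ := hcompl _ (hmodel h)
    exact NTDD.extract_cert C D hsub P _ hP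
  let cert : ↥S → IdTree := fun h => Classical.choose (getQ h)
  have hcert : ∀ h : ↥S, D.IsCert (cert h) (Y.piecewise (tau h) (sig h)) :=
    fun h => Classical.choose_spec (getQ h)
  let Φ : ↥S → ↥D.nodes := fun h =>
    ⟨(cert h).root, NTDD.isCert_root_mem D (cert h) _ (hcert h)⟩
  have hinj : Function.Injective Φ := by
    intro h1 h2 heq
    have hroot : (cert h1).root = (cert h2).root := congrArg Subtype.val heq
    apply Subtype.ext
    rw [htau' h1, htau' h2]
    funext σ''
    apply propext
    constructor
    · exact dir (tau h1) (tau h2) (cert h1) (cert h2)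
        (lift _ _ _ (hcert h1)) (lift _ _ _ (hcert h2)) hroot σ''
    · exact dir (tau h2) (tau h1) (cert h2) (cert h1)
        (lift _ _ _ (hcert h2)) (lift _ _ _ (hcert h1)) hroot.symm σ''
  calc Nat.card ↥S ≤ Nat.card ↥D.nodes := Nat.card_le_card_of_injective Φ hinj
    _ = D.nodes.card := Nat.card_eq_finsetCard _
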